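/- arXiv:1911.12746 — 4 statements merged into one kernel-verified Lean document; each statement's English description precedes it below -/
import Mathlib

section
/- For every integer m ≥ 0 there exist m+1 positive real numbers λ_{m,0}, …, λ_{m,m} such that the m-th derivative of the function x ↦ 1/((1-x)·ln(1-x)) on (0,1) equals (1/((1-x)^{m+1}·ln(1-x))) · Σ_{k=0}^{m} λ_{m,k}/ln^k(1-x). Moreover the coefficients satisfy the recurrence λ_{n+1,k} = (n+1)λ_{n,k} + k·λ_{n,k-1} with λ_{0,0} = 1 and λ_{n,-1} = λ_{n,n+1} = 0. -/
open Set Finset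

noncomputable def lam0 : ℕ → ℕ → ℝ
  | 0, 0 => 1
  | 0, _ + 1 => 0
  | n + 1, k => (n + 1 : ℝ) * lam0 n k + (k : ℝ) * (if k = 0 then 0 else lam0 n (k - 1))

lemma lam0_zero : ∀ n k, k > n → lam0 n k = 0 := by
  intro n
  induction n with
  | zero => intro k hk; match k, hk with | (j+1), _ => rfl
  | succ n ih =>
    intro k hk
    match k, hk with
    | (j+1), hk =>
      show (n + 1 : ℝ) * lam0 n (j+1) + ((j+1 : ℕ) : ℝ) * (if (j+1) = 0 then 0 else lam0 n j) = 0
      rw [ih (j+1) (by omega), if_neg (Nat.succ_ne_zero j), ih j (by omega)]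
      ring

lemma lam0_rec (n k : ℕ) : lam0 (n + 1) k =
    (n + 1 : ℝ) * lam0 n k + (k : ℝ) * (if k = 0 then 0 else lam0 n (k - 1)) := rfl

lemma lam0_pos : ∀ m k, k ≤ m → 0 < lam0 m k := by
  intro m
  induction m with
  | zero => intro k hk; interval_cases k; norm_num [lam0]
  | succ m ih =>
    intro k hk
    rw [lam0_rec]
    rcases Nat.lt_or_ge k (m+1) with h | h
    · have h1 : (0:ℝ) < (m + 1 : ℝ) * lam0 m k := by
        have := ih k (by omega); positivity
      have h2 : (0:ℝ) ≤ (k : ℝ) * (if k = 0 then 0 else lam0 m (k - 1)) := by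
        rcases Nat.eq_zero_or_pos k with rfl | hk0
        · simp
        · rw [if_neg (by omega)]
          have := ih (k-1) (by omega)
          positivity
      linarith
    · have hk' : k = m + 1 := le_antisymm hk h
      subst hk'
      rw [lam0_zero m (m+1) (by omega), if_neg (by omega)]
      have := ih m le_rfl
      have : (0:ℝ) < ((m+1 : ℕ) : ℝ) * lam0 m m := by positivity
      push_cast at this ⊢
      linarith

noncomputable def g0 (m : ℕ) (x : ℝ) : ℝ :=
  ∑ k ∈ Finset.range (m + 1),
    lam0 m k * ((1 - x)⁻¹) ^ (m + 1) * ((Real.log (1 - x))⁻¹) ^ (k + 1)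

lemma g0_hasDeriv (m : ℕ) (x : ℝ) (hx : x ∈ Set.Ioo (0:ℝ) 1) :
    HasDerivAt (g0 m) (g0 (m+1) x) x := by
  obtain ⟨hx0, hx1⟩ := hx
  have hu : (0:ℝ) < 1 - x := by linarith
  have hune : (1:ℝ) - x ≠ 0 := ne_of_gt hu
  have hL : Real.log (1 - x) < 0 := Real.log_neg hu (by linarith)
  have hLne : Real.log (1 - x) ≠ 0 := ne_of_lt hL
  set a : ℝ := (1 - x)⁻¹ with ha
  set b : ℝ := (Real.log (1 - x))⁻¹ with hb
  have h1 : HasDerivAt (fun t : ℝ => 1 - t) (-1) x := (hasDerivAt_id x).const_sub 1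
  have hA : HasDerivAt (fun t : ℝ => (1 - t)⁻¹) (a ^ 2) x := by
    have := h1.inv hune
    refine this.congr_deriv (Eq.symm ?_)
    rw [ha]; field_simp
  have hlog : HasDerivAt (fun t : ℝ => Real.log (1 - t)) (-a) x := by
    have := (Real.hasDerivAt_log hune).comp x h1
    refine this.congr_deriv (Eq.symm ?_)
    rw [ha]; simp
  have hB : HasDerivAt (fun t : ℝ => (Real.log (1 - t))⁻¹) (a * b ^ 2) x := by
    have := hlog.inv hLne
    refine this.congr_deriv (Eq.symm ?_)
    rw [ha, hb]; field_simp
  have hterm : ∀ k ∈ Finset.range (m + 1),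
      HasDerivAt (fun t : ℝ => lam0 m k * ((1 - t)⁻¹) ^ (m + 1) * ((Real.log (1 - t))⁻¹) ^ (k + 1))
        (lam0 m k * ((m + 1 : ℝ) * a ^ (m + 2) * b ^ (k + 1)
          + (k + 1 : ℝ) * a ^ (m + 2) * b ^ (k + 2))) x := by
    intro k _
    have h := (((hA.pow (m+1)).const_mul (lam0 m k)).mul (hB.pow (k+1)))
    refine h.congr_deriv (Eq.symm ?_)
    push_cast
    simp only [Pi.pow_apply, ← ha, ← hb]
    ring
  have hsum := HasDerivAt.fun_sum hterm
  refine HasDerivAt.congr_deriv (f := g0 m) hsum (Eq.symm ?_)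
  unfold g0
  have step1 : ∀ k ∈ Finset.range (m + 2),
      lam0 (m+1) k * ((1 - x)⁻¹) ^ (m + 2) * ((Real.log (1 - x))⁻¹) ^ (k + 1)
        = (m + 1 : ℝ) * lam0 m k * a ^ (m + 2) * b ^ (k + 1)
          + (k : ℝ) * (if k = 0 then 0 else lam0 m (k - 1)) * a ^ (m + 2) * b ^ (k + 1) := by
    intro k _
    rw [lam0_rec]
    ring
  rw [show m + 1 + 1 = m + 2 from rfl, Finset.sum_congr rfl step1, Finset.sum_add_distrib]
  have e1 : ∑ k ∈ Finset.range (m + 2), (m + 1 : ℝ) * lam0 m k * a ^ (m + 2) * b ^ (k + 1)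
      = ∑ k ∈ Finset.range (m + 1), (m + 1 : ℝ) * lam0 m k * a ^ (m + 2) * b ^ (k + 1) := by
    rw [Finset.sum_range_succ, lam0_zero m (m+1) (by omega)]
    ring
  have e2 : ∑ k ∈ Finset.range (m + 2),
        (k : ℝ) * (if k = 0 then 0 else lam0 m (k - 1)) * a ^ (m + 2) * b ^ (k + 1)
      = ∑ k ∈ Finset.range (m + 1), ((k : ℝ) + 1) * lam0 m k * a ^ (m + 2) * b ^ (k + 2) := by
    rw [Finset.sum_range_succ']
    simp only [Nat.cast_zero, zero_mul, if_pos rfl, mul_zero, add_zero, zero_mul, add_zero]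
    apply Finset.sum_congr rfl
    intro k _
    rw [if_neg (Nat.succ_ne_zero k), Nat.add_sub_cancel]
    push_cast
    try ring
  rw [e1, e2, ← Finset.sum_add_distrib]
  apply Finset.sum_congr rfl
  intro k _
  push_cast
  ring

lemma iter_eq (m : ℕ) : ∀ x ∈ Set.Ioo (0:ℝ) 1,
    iteratedDeriv m (fun t : ℝ => 1 / ((1 - t) * Real.log (1 - t))) x = g0 m x := by
  induction m with
  | zero =>
    intro x ⟨hx0, hx1⟩
    have hu : (0:ℝ) < 1 - x := by linarith
    have hune : (1:ℝ) - x ≠ 0 := ne_of_gt hu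
    have hLne : Real.log (1 - x) ≠ 0 := ne_of_lt (Real.log_neg hu (by linarith))
    simp only [iteratedDeriv_zero, g0, zero_add, Finset.sum_range_one, pow_one,
      show lam0 0 0 = 1 from rfl, one_mul]
    field_simp
  | succ m ih =>
    intro x hx
    rw [iteratedDeriv_succ]
    have hev : iteratedDeriv m (fun t : ℝ => 1 / ((1 - t) * Real.log (1 - t))) =ᶠ[nhds x] g0 m := by
      filter_upwards [isOpen_Ioo.mem_nhds hx] with y hy using ih y hy
    rw [hev.deriv_eq, (g0_hasDeriv m x hx).deriv]

theorem stmt_0 :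
    ∃ lam : ℕ → ℕ → ℝ,
      lam 0 0 = 1 ∧
      (∀ n k, k > n → lam n k = 0) ∧
      (∀ n k, lam (n + 1) k =
          (n + 1 : ℝ) * lam n k + (k : ℝ) * (if k = 0 then 0 else lam n (k - 1))) ∧
      (∀ m k, k ≤ m → 0 < lam m k) ∧
      (∀ (m : ℕ), ∀ x ∈ Set.Ioo (0 : ℝ) 1,
        iteratedDeriv m (fun t : ℝ => 1 / ((1 - t) * Real.log (1 - t))) x =
          (1 / ((1 - x) ^ (m + 1) * Real.log (1 - x))) *
            ∑ k ∈ Finset.range (m + 1), lam m k / (Real.log (1 - x)) ^ k) := by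
  refine ⟨lam0, rfl, lam0_zero, lam0_rec, lam0_pos, ?_⟩
  intro m x hx
  rw [iter_eq m x hx]
  obtain ⟨hx0, hx1⟩ := hx
  have hu : (0:ℝ) < 1 - x := by linarith
  have hune : (1:ℝ) - x ≠ 0 := ne_of_gt hu
  have hLne : Real.log (1 - x) ≠ 0 := ne_of_lt (Real.log_neg hu (by linarith))
  unfold g0
  rw [Finset.mul_sum]
  apply Finset.sum_congr rfl
  intro k _
  simp only [div_eq_mul_inv, one_mul, mul_inv, inv_pow]
  try ring
  try exact Or.inl trivial
end

section
/- Let m ≥ 1 and let x₀, x₁, …, x_{m-1} be real numbers. For each vector (y₀, …, y_{m-1}) ∈ ℝ^m there exists a unique polynomial A of degree at most m-1 such that A^{(k)}(x_k) = y_k for k = 0, 1, …, m-1. -/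
open Polynomial

lemma key_zero (m : ℕ) (x : Fin m → ℝ) (A : Polynomial ℝ) (hdeg : A.degree < m)
    (h : ∀ k : Fin m, ((Polynomial.derivative)^[(k : ℕ)] A).eval (x k) = 0) : A = 0 := by
  by_contra hA
  set d := A.natDegree with hd
  have hdm : d < m := by
    have := Polynomial.natDegree_lt_iff_degree_lt (n := m) (p := A) hA |>.mpr
    exact this (by exact_mod_cast hdeg)
  have hk := h ⟨d, hdm⟩
  have hnd : (derivative^[d] A).natDegree ≤ 0 := by
    have := Polynomial.natDegree_iterate_derivative A d
    omega
  have hC : derivative^[d] A = Polynomial.C ((derivative^[d] A).coeff 0) :=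
    Polynomial.eq_C_of_natDegree_le_zero hnd
  have hcoeff : (derivative^[d] A).coeff 0 = (0 + d).descFactorial d • A.coeff (0 + d) :=
    Polynomial.coeff_iterate_derivative A 0
  have hlc : A.coeff d ≠ 0 := Polynomial.leadingCoeff_ne_zero.mpr hA
  have hne : (derivative^[d] A).coeff 0 ≠ 0 := by
    rw [hcoeff]
    simp only [zero_add, Nat.descFactorial_self, nsmul_eq_mul]
    exact mul_ne_zero (Nat.cast_ne_zero.mpr d.factorial_ne_zero) hlc
  rw [hC] at hk
  simp at hk
  exact hne hk

theorem stmt_5 (m : ℕ) (hm : 1 ≤ m) (x y : Fin m → ℝ) :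
    ∃! A : Polynomial ℝ, A.degree < m ∧
      ∀ k : Fin m, ((Polynomial.derivative)^[(k : ℕ)] A).eval (x k) = y k := by
  -- the linear map
  let φ : Polynomial.degreeLT ℝ m →ₗ[ℝ] (Fin m → ℝ) :=
    LinearMap.pi fun k =>
      (Polynomial.leval (x k)).comp
        (((Polynomial.derivative : ℝ[X] →ₗ[ℝ] ℝ[X]) ^ (k : ℕ)).comp
          (Polynomial.degreeLT ℝ m).subtype)
  have hφ : ∀ (P : Polynomial.degreeLT ℝ m) (k : Fin m),
      φ P k = ((Polynomial.derivative)^[(k : ℕ)] (P : ℝ[X])).eval (x k) := by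
    intro P k
    simp [φ, Module.End.pow_apply]
  have hinj : Function.Injective φ := by
    rw [← LinearMap.ker_eq_bot, LinearMap.ker_eq_bot']
    intro P hP
    have : (P : ℝ[X]) = 0 := by
      apply key_zero m x _ (Polynomial.mem_degreeLT.mp P.2)
      intro k
      rw [← hφ P k, hP]
      rfl
    exact Subtype.ext this
  -- make endomorphism
  let ψ : (Fin m → ℝ) →ₗ[ℝ] (Fin m → ℝ) := φ.comp (Polynomial.degreeLTEquiv ℝ m).symm.toLinearMap
  have hψinj : Function.Injective ψ := hinj.comp (Polynomial.degreeLTEquiv ℝ m).symm.injective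
  have hψsurj : Function.Surjective ψ := LinearMap.injective_iff_surjective.mp hψinj
  obtain ⟨v, hv⟩ := hψsurj y
  set P := (Polynomial.degreeLTEquiv ℝ m).symm v with hPdef
  refine ⟨(P : ℝ[X]), ⟨Polynomial.mem_degreeLT.mp P.2, ?_⟩, ?_⟩
  · intro k
    rw [← hφ P k]
    have : φ P = y := hv
    rw [this]
  · rintro B ⟨hBdeg, hBval⟩
    have hBmem : B ∈ Polynomial.degreeLT ℝ m := Polynomial.mem_degreeLT.mpr hBdeg
    have : φ ⟨B, hBmem⟩ = φ P := by
      funext k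
      rw [hφ, hφ, hBval k]
      have : φ P = y := hv
      rw [← this, hφ]
    have := hinj this
    exact congrArg Subtype.val this
end

section
/- Let α, β > -1, ℓ ≥ 1, ϖ = (ω₀,…,ω_{ℓ-1}) ∈ ℝ^ℓ, and let {p_n^{α,β}}_{n≥0} be the orthonormal Jacobi polynomials with respect to dμ^{α,β}(x) = (1-x)^α(1+x)^β dx on [-1,1]. Define q_n = G_{ϖ,n} (the n-th Goncharov polynomial associated with ϖ) for 0 ≤ n ≤ ℓ-1, and q_n(x) = the ℓ-fold iterated integral ∫_{ω₀}^x∫_{ω₁}^{s₁}⋯∫_{ω_{ℓ-1}}^{s_{ℓ-1}} p_{n-ℓ}^{α,β}(s_ℓ) ds_ℓ⋯ds₁ for n ≥ ℓ. Then {q_n}_{n≥0} is an orthonormal sequence with respect to the inner product ⟨f,g⟩_S = Σ_{k=0}^{ℓ-1} f^{(k)}(ω_k) g^{(k)}(ω_k) + ∫_{-1}^1 f^{(ℓ)}(x) g^{(ℓ)}(x) dμ^{α,β}(x), and each q_n has degree exactly n. -/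
open Set MeasureTheory Finset

/-- Iterated integral of `g` with the list of lower limits `cs`. -/
noncomputable def iterIntF : List ℝ → (ℝ → ℝ) → (ℝ → ℝ)
  | [], g => g
  | c :: cs, g => fun s => ∫ t in c..s, iterIntF cs g t

/-- The Sobolev orthogonal polynomials: Goncharov polynomials for `n < ℓ`, and
`ℓ`-fold iterated integrals of the orthonormal Jacobi polynomials for `n ≥ ℓ`. -/
noncomputable def sobQ (ℓ : ℕ) (ω : ℕ → ℝ) (jp : ℕ → Polynomial ℝ) (n : ℕ) : ℝ → ℝ :=
  if n < ℓ then iterIntF ((List.range n).map ω) (fun _ => 1)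
  else iterIntF ((List.range ℓ).map ω) (fun t => (jp (n - ℓ)).eval t)

open Polynomial in
lemma exists_antideriv (P : Polynomial ℝ) : ∃ Q : Polynomial ℝ, Q.derivative = P := by
  induction P using Polynomial.induction_on' with
  | add p q hp hq =>
      obtain ⟨P1, h1⟩ := hp; obtain ⟨Q1, h2⟩ := hq
      exact ⟨P1 + Q1, by simp [h1, h2]⟩
  | monomial n a =>
      refine ⟨Polynomial.C (a / (n + 1)) * Polynomial.X ^ (n + 1), ?_⟩
      have hne : ((n : ℝ) + 1) ≠ 0 := by positivity
      rw [derivative_C_mul, derivative_X_pow]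
      rw [← mul_assoc, ← C_mul]
      push_cast
      rw [div_mul_cancel₀ a hne]
      exact C_mul_X_pow_eq_monomial

/-- A polynomial antiderivative. -/
noncomputable def anti (P : Polynomial ℝ) : Polynomial ℝ :=
  Classical.choose (exists_antideriv P)

lemma derivative_anti (P : Polynomial ℝ) : (anti P).derivative = P :=
  Classical.choose_spec (exists_antideriv P)

/-- Polynomial version of the iterated integral. -/
noncomputable def polyII : List ℝ → Polynomial ℝ → Polynomial ℝ
  | [], P => P
  | c :: cs, P => anti (polyII cs P) - Polynomial.C ((anti (polyII cs P)).eval c)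

lemma polyII_deriv (c : ℝ) (cs : List ℝ) (P : Polynomial ℝ) :
    (polyII (c :: cs) P).derivative = polyII cs P := by
  simp [polyII, derivative_anti]

lemma polyII_eval_head (c : ℝ) (cs : List ℝ) (P : Polynomial ℝ) :
    (polyII (c :: cs) P).eval c = 0 := by
  simp [polyII]

lemma iterIntF_eq (cs : List ℝ) (P : Polynomial ℝ) (x : ℝ) :
    iterIntF cs (fun t => P.eval t) x = (polyII cs P).eval x := by
  induction cs generalizing x with
  | nil => rfl
  | cons c cs ih =>
      show (∫ t in c..x, iterIntF cs (fun t => P.eval t) t) = _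
      have hfun : (fun t => iterIntF cs (fun t => P.eval t) t)
          = fun t => (polyII cs P).eval t := funext ih
      rw [hfun]
      have hF : ∀ t ∈ Set.uIcc c x, HasDerivAt (fun y => (polyII (c :: cs) P).eval y)
          ((polyII cs P).eval t) t := by
        intro t _
        have h := Polynomial.hasDerivAt (polyII (c :: cs) P) t
        rwa [polyII_deriv] at h
      rw [intervalIntegral.integral_eq_sub_of_hasDerivAt hF
        (((polyII cs P).continuous_aeval.intervalIntegrable c x))]
      rw [polyII_eval_head]; ring

lemma polyII_natDegree (cs : List ℝ) (P : Polynomial ℝ) (hP : P ≠ 0) :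
    polyII cs P ≠ 0 ∧ (polyII cs P).natDegree = P.natDegree + cs.length := by
  induction cs with
  | nil => exact ⟨hP, by simp [polyII]⟩
  | cons c cs ih =>
      obtain ⟨h0, hd⟩ := ih
      have hder : (polyII (c :: cs) P).derivative = polyII cs P := polyII_deriv c cs P
      have hR0 : polyII (c :: cs) P ≠ 0 := by
        intro h
        exact h0 (by rw [← hder, h, Polynomial.derivative_zero])
      have hnd : (polyII (c :: cs) P).natDegree ≠ 0 := by
        intro h
        apply h0
        rw [← hder, Polynomial.eq_C_of_natDegree_eq_zero h, Polynomial.derivative_C]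
      have hdeg := Polynomial.degree_derivative_eq (polyII (c :: cs) P) (Nat.pos_of_ne_zero hnd)
      rw [hder] at hdeg
      have h2 : (polyII cs P).natDegree = (polyII (c :: cs) P).natDegree - 1 :=
        Polynomial.natDegree_eq_of_degree_eq_some hdeg
      refine ⟨hR0, ?_⟩
      have hpos := Nat.pos_of_ne_zero hnd
      simp only [List.length_cons]
      omega

lemma polyII_iterate (cs : List ℝ) (P : Polynomial ℝ) (k : ℕ) (hk : k ≤ cs.length) :
    Polynomial.derivative^[k] (polyII cs P) = polyII (cs.drop k) P := by
  induction k generalizing cs with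
  | zero => simp
  | succ k ih =>
      cases cs with
      | nil => simp at hk
      | cons c cs =>
          rw [Function.iterate_succ_apply, polyII_deriv]
          exact ih cs (by simpa using hk)

lemma iteratedDeriv_polyeval (Q : Polynomial ℝ) (k : ℕ) :
    iteratedDeriv k (fun x => Q.eval x) = fun x => (Polynomial.derivative^[k] Q).eval x := by
  induction k generalizing Q with
  | zero => simp
  | succ k ih =>
      rw [iteratedDeriv_succ']
      have h : deriv (fun x => Q.eval x) = fun x => Q.derivative.eval x :=
        funext fun x => Polynomial.deriv Q
      rw [h, ih, Function.iterate_succ_apply]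

/-- The polynomial version of `sobQ`. -/
noncomputable def sobP (ℓ : ℕ) (ω : ℕ → ℝ) (jp : ℕ → Polynomial ℝ) (n : ℕ) : Polynomial ℝ :=
  if n < ℓ then polyII ((List.range n).map ω) 1
  else polyII ((List.range ℓ).map ω) (jp (n - ℓ))

lemma sobQ_eq_eval (ℓ : ℕ) (ω : ℕ → ℝ) (jp : ℕ → Polynomial ℝ) (n : ℕ) :
    sobQ ℓ ω jp n = fun x => (sobP ℓ ω jp n).eval x := by
  unfold sobQ sobP
  split
  · have h : (fun _ : ℝ => (1 : ℝ)) = fun t => (1 : Polynomial ℝ).eval t := by simp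
    rw [h]
    exact funext (iterIntF_eq _ _)
  · exact funext (iterIntF_eq _ _)

lemma node_zero (cs : List ℝ) (P : Polynomial ℝ) (k : ℕ) (hk : k < cs.length) :
    (Polynomial.derivative^[k] (polyII cs P)).eval cs[k] = 0 := by
  rw [polyII_iterate cs P k hk.le, List.drop_eq_getElem_cons hk, polyII_eval_head]

theorem stmt_13 (α β : ℝ) (hα : -1 < α) (hβ : -1 < β) (ℓ : ℕ) (hℓ : 1 ≤ ℓ)
    (ω : ℕ → ℝ) (jp : ℕ → Polynomial ℝ)
    (hdeg : ∀ n, (jp n).natDegree = n)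
    (horth : ∀ m n, (∫ x in Set.Ioo (-1 : ℝ) 1,
        (jp m).eval x * (jp n).eval x * ((1 - x) ^ α * (1 + x) ^ β)) =
      if m = n then 1 else 0) :
    (∀ n, ∃ P : Polynomial ℝ, P.natDegree = n ∧ ∀ x, sobQ ℓ ω jp n x = P.eval x) ∧
    (∀ m n,
      (∑ k ∈ Finset.range ℓ,
          iteratedDeriv k (sobQ ℓ ω jp m) (ω k) * iteratedDeriv k (sobQ ℓ ω jp n) (ω k)) +
        (∫ x in Set.Ioo (-1 : ℝ) 1,
          iteratedDeriv ℓ (sobQ ℓ ω jp m) x * iteratedDeriv ℓ (sobQ ℓ ω jp n) x *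
            ((1 - x) ^ α * (1 + x) ^ β)) =
      if m = n then 1 else 0) := by
  -- jp k is never zero
  have hjp : ∀ k, jp k ≠ 0 := by
    intro k hk
    have h := horth k k
    rw [hk] at h
    simp at h
  -- degrees of sobP
  have hPdeg : ∀ n, (sobP ℓ ω jp n).natDegree = n := by
    intro n
    unfold sobP
    split
    · have h := polyII_natDegree ((List.range n).map ω) 1 one_ne_zero
      simpa using h.2
    · have h := polyII_natDegree ((List.range ℓ).map ω) (jp (n - ℓ)) (hjp _)
      rw [h.2, hdeg]
      simp only [List.length_map, List.length_range]
      omega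
  -- iterated derivatives
  have hID : ∀ n k, iteratedDeriv k (sobQ ℓ ω jp n)
      = fun x => (Polynomial.derivative^[k] (sobP ℓ ω jp n)).eval x := by
    intro n k
    rw [sobQ_eq_eval, iteratedDeriv_polyeval]
  -- value at node, k < min ℓ n (covers both cases): zero
  have hnode : ∀ n k, k < ℓ → k < n → iteratedDeriv k (sobQ ℓ ω jp n) (ω k) = 0 := by
    intro n k hkℓ hkn
    rw [hID]
    unfold sobP
    split
    · have hlen : k < ((List.range n).map ω).length := by simpa using hkn
      have h := node_zero ((List.range n).map ω) 1 k hlen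
      simpa using h
    · have hlen : k < ((List.range ℓ).map ω).length := by simpa using hkℓ
      have h := node_zero ((List.range ℓ).map ω) (jp (n - ℓ)) k hlen
      simpa using h
  -- ℓ-th derivative for n ≥ ℓ
  have hfull : ∀ n, ℓ ≤ n → iteratedDeriv ℓ (sobQ ℓ ω jp n)
      = fun x => (jp (n - ℓ)).eval x := by
    intro n hn
    rw [hID]
    unfold sobP
    rw [if_neg (by omega)]
    rw [polyII_iterate _ _ ℓ (by simp)]
    have hd : (((List.range ℓ).map ω).drop ℓ) = [] := List.drop_eq_nil_of_le (by simp)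
    rw [hd]
    rfl
  -- derivative beyond the degree vanishes
  have hzero : ∀ n k, n < k → iteratedDeriv k (sobQ ℓ ω jp n) = fun _ => 0 := by
    intro n k hk
    rw [hID]
    rw [Polynomial.iterate_derivative_eq_zero (by rw [hPdeg]; exact hk)]
    simp
  -- n-th derivative of sobQ n for n < ℓ is 1
  have hdiag : ∀ n, n < ℓ → iteratedDeriv n (sobQ ℓ ω jp n) = fun _ => 1 := by
    intro n hn
    rw [hID]
    unfold sobP
    rw [if_pos hn]
    rw [polyII_iterate _ _ n (by simp)]
    have hd : (((List.range n).map ω).drop n) = [] := List.drop_eq_nil_of_le (by simp)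
    rw [hd]
    funext x
    simp [polyII]
  constructor
  · intro n
    exact ⟨sobP ℓ ω jp n, hPdeg n, fun x => by rw [sobQ_eq_eval]⟩
  · intro m n
    -- the "delta" form of the node values for m < ℓ
    have hval : ∀ m, m < ℓ → ∀ k, k < ℓ →
        iteratedDeriv k (sobQ ℓ ω jp m) (ω k) = if k = m then 1 else 0 := by
      intro m hm k hk
      rcases lt_trichotomy k m with h | h | h
      · rw [hnode m k hk h, if_neg (by omega)]
      · subst h; rw [hdiag k hm, if_pos rfl]
      · rw [hzero m k h, if_neg (by omega)]
    rcases lt_or_ge m ℓ with hm | hm <;> rcases lt_or_ge n ℓ with hn | hn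
    · -- both Goncharov
      have hint : (∫ x in Set.Ioo (-1 : ℝ) 1,
          iteratedDeriv ℓ (sobQ ℓ ω jp m) x * iteratedDeriv ℓ (sobQ ℓ ω jp n) x *
            ((1 - x) ^ α * (1 + x) ^ β)) = 0 := by
        rw [hzero m ℓ hm, hzero n ℓ hn]
        simp
      rw [hint, add_zero]
      have hsum : (∑ k ∈ Finset.range ℓ,
          iteratedDeriv k (sobQ ℓ ω jp m) (ω k) * iteratedDeriv k (sobQ ℓ ω jp n) (ω k))
          = ∑ k ∈ Finset.range ℓ, (if k = m then (1:ℝ) else 0) * (if k = n then 1 else 0) := by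
        refine Finset.sum_congr rfl fun k hk => ?_
        rw [hval m hm k (Finset.mem_range.mp hk), hval n hn k (Finset.mem_range.mp hk)]
      rw [hsum]
      by_cases hmn : m = n
      · subst hmn
        rw [if_pos rfl]
        rw [Finset.sum_eq_single m]
        · simp
        · intro k _ hk; simp [hk]
        · intro h; exact absurd (Finset.mem_range.mpr hm) h
      · rw [if_neg hmn]
        apply Finset.sum_eq_zero
        intro k _
        split_ifs with h1 h2
        · exact absurd (h1.symm.trans h2) hmn
        all_goals ring
    · -- m Goncharov, n high
      have hint : (∫ x in Set.Ioo (-1 : ℝ) 1,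
          iteratedDeriv ℓ (sobQ ℓ ω jp m) x * iteratedDeriv ℓ (sobQ ℓ ω jp n) x *
            ((1 - x) ^ α * (1 + x) ^ β)) = 0 := by
        rw [hzero m ℓ hm]
        simp
      have hsum : (∑ k ∈ Finset.range ℓ,
          iteratedDeriv k (sobQ ℓ ω jp m) (ω k) * iteratedDeriv k (sobQ ℓ ω jp n) (ω k)) = 0 := by
        apply Finset.sum_eq_zero
        intro k hk
        rw [hnode n k (Finset.mem_range.mp hk) (lt_of_lt_of_le (Finset.mem_range.mp hk) hn)]
        ring
      rw [hint, hsum, if_neg (by omega)]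
      ring
    · -- m high, n Goncharov
      have hint : (∫ x in Set.Ioo (-1 : ℝ) 1,
          iteratedDeriv ℓ (sobQ ℓ ω jp m) x * iteratedDeriv ℓ (sobQ ℓ ω jp n) x *
            ((1 - x) ^ α * (1 + x) ^ β)) = 0 := by
        rw [hzero n ℓ hn]
        simp
      have hsum : (∑ k ∈ Finset.range ℓ,
          iteratedDeriv k (sobQ ℓ ω jp m) (ω k) * iteratedDeriv k (sobQ ℓ ω jp n) (ω k)) = 0 := by
        apply Finset.sum_eq_zero
        intro k hk
        rw [hnode m k (Finset.mem_range.mp hk) (lt_of_lt_of_le (Finset.mem_range.mp hk) hm)]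
        ring
      rw [hint, hsum, if_neg (by omega)]
      ring
    · -- both high
      have hsum : (∑ k ∈ Finset.range ℓ,
          iteratedDeriv k (sobQ ℓ ω jp m) (ω k) * iteratedDeriv k (sobQ ℓ ω jp n) (ω k)) = 0 := by
        apply Finset.sum_eq_zero
        intro k hk
        rw [hnode m k (Finset.mem_range.mp hk) (lt_of_lt_of_le (Finset.mem_range.mp hk) hm)]
        ring
      rw [hsum, zero_add, hfull m hm, hfull n hn]
      rw [horth (m - ℓ) (n - ℓ)]
      by_cases hmn : m = n
      · rw [if_pos (by omega), if_pos hmn]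
      · rw [if_neg (by omega), if_neg hmn]
end

section
/- Let S_n^S(f,·) = Σ_{k=0}^n ⟨f, q_k⟩_S q_k be the n-th partial sum of the Fourier–Sobolev series. Then for 0 ≤ k ≤ ℓ-1, the k-th derivative satisfies (S_n^S)^{(k)}(f, ω_k) = f^{(k)}(ω_k) if n ≥ k and 0 if n < k; and for n ≥ ℓ, (S_n^S)^{(ℓ)}(f, x) = S_{n-ℓ}^{α,β}(f^{(ℓ)}, x), where S_m^{α,β}(g,·) = Σ_{j=0}^m ⟨g, p_j^{α,β}⟩_{L²(μ^{α,β})} p_j^{α,β} is the m-th Jacobi–Fourier partial sum. -/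
open Set MeasureTheory Finset

lemma iterDeriv_poly (k : ℕ) (P : Polynomial ℝ) :
    iteratedDeriv k (fun x => P.eval x) =
      fun x => (Polynomial.derivative^[k] P).eval x := by
  induction k generalizing P with
  | zero => simp
  | succ k ih =>
      rw [iteratedDeriv_succ']
      have : deriv (fun x => P.eval x) = fun x => P.derivative.eval x := by
        funext x; exact P.deriv
      rw [this, ih, Function.iterate_succ_apply]

lemma iterDeriv_sum (k : ℕ) (s : Finset ℕ) (c : ℕ → ℝ) (P : ℕ → Polynomial ℝ) (x : ℝ) :
    iteratedDeriv k (fun y => ∑ j ∈ s, c j * (P j).eval y) x =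
      ∑ j ∈ s, c j * iteratedDeriv k (fun y => (P j).eval y) x := by
  have h1 : (fun y => ∑ j ∈ s, c j * (P j).eval y) =
      fun y => (∑ j ∈ s, Polynomial.C (c j) * P j).eval y := by
    funext y; simp [Polynomial.eval_finset_sum]
  rw [h1, iterDeriv_poly, Polynomial.iterate_derivative_sum]
  simp [Polynomial.eval_finset_sum, Polynomial.iterate_derivative_C_mul, iterDeriv_poly]

/-- The Jacobi weight. -/
noncomputable def jacW (α β x : ℝ) : ℝ := (1 - x) ^ α * (1 + x) ^ β

/-- The discrete-continuous Jacobi-Sobolev inner product. -/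
noncomputable def sobIP (α β : ℝ) (ℓ : ℕ) (ω : ℕ → ℝ) (f g : ℝ → ℝ) : ℝ :=
  (∑ k ∈ Finset.range ℓ, iteratedDeriv k f (ω k) * iteratedDeriv k g (ω k)) +
    ∫ x in Set.Ioo (-1 : ℝ) 1, iteratedDeriv ℓ f x * iteratedDeriv ℓ g x * jacW α β x

/-- The `n`-th partial sum of the Fourier–Sobolev series of `f`. -/
noncomputable def sobPartialSum (α β : ℝ) (ℓ : ℕ) (ω : ℕ → ℝ) (q : ℕ → ℝ → ℝ)
    (f : ℝ → ℝ) (n : ℕ) : ℝ → ℝ :=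
  fun x => ∑ k ∈ Finset.range (n + 1), sobIP α β ℓ ω f (q k) * q k x

/-- The `j`-th Jacobi–Fourier coefficient of `g`. -/
noncomputable def jacCoef (α β : ℝ) (jp : ℕ → Polynomial ℝ) (g : ℝ → ℝ) (j : ℕ) : ℝ :=
  ∫ x in Set.Ioo (-1 : ℝ) 1, g x * (jp j).eval x * jacW α β x

/-- The `m`-th partial sum of the Jacobi–Fourier series of `g`. -/
noncomputable def jacPartialSum (α β : ℝ) (jp : ℕ → Polynomial ℝ) (g : ℝ → ℝ)
    (m : ℕ) : ℝ → ℝ :=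
  fun x => ∑ j ∈ Finset.range (m + 1), jacCoef α β jp g j * (jp j).eval x

theorem stmt_15 (α β : ℝ) (hα : -1 < α) (hβ : -1 < β) (ℓ : ℕ) (hℓ : 1 ≤ ℓ)
    (ω : ℕ → ℝ) (jp : ℕ → Polynomial ℝ) (q : ℕ → ℝ → ℝ)
    (hq_poly : ∀ n, ∃ P : Polynomial ℝ, q n = fun x => P.eval x)
    (hq_low_der : ∀ n < ℓ, ∀ k < ℓ,
      iteratedDeriv k (q n) (ω k) = if k = n then 1 else 0)
    (hq_low_top : ∀ n < ℓ, ∀ x : ℝ, iteratedDeriv ℓ (q n) x = 0)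
    (hq_high_der : ∀ n, ℓ ≤ n → ∀ k < ℓ, iteratedDeriv k (q n) (ω k) = 0)
    (hq_high_top : ∀ n, ℓ ≤ n → ∀ x : ℝ,
      iteratedDeriv ℓ (q n) x = (jp (n - ℓ)).eval x)
    (f : ℝ → ℝ)
    (hf : IntegrableOn (fun x : ℝ => iteratedDeriv ℓ f x * jacW α β x)
      (Set.Ioo (-1 : ℝ) 1)) :
    (∀ n : ℕ, ∀ k < ℓ,
      iteratedDeriv k (sobPartialSum α β ℓ ω q f n) (ω k) =
        if k ≤ n then iteratedDeriv k f (ω k) else 0) ∧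
    (∀ n : ℕ, ℓ ≤ n → ∀ x : ℝ,
      iteratedDeriv ℓ (sobPartialSum α β ℓ ω q f n) x =
        jacPartialSum α β jp (iteratedDeriv ℓ f) (n - ℓ) x) := by
    classical
  choose P hP using hq_poly
  -- the partial sum derivative expands termwise
  have key : ∀ n k x, iteratedDeriv k (sobPartialSum α β ℓ ω q f n) x =
      ∑ j ∈ Finset.range (n + 1), sobIP α β ℓ ω f (q j) * iteratedDeriv k (q j) x := by
    intro n k x
    have h1 : sobPartialSum α β ℓ ω q f n =
        fun y => ∑ j ∈ Finset.range (n + 1), sobIP α β ℓ ω f (q j) * (P j).eval y := by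
      funext y
      simp only [sobPartialSum]
      exact Finset.sum_congr rfl fun j _ => by rw [hP j]
    rw [h1, iterDeriv_sum]
    exact Finset.sum_congr rfl fun j _ => by rw [← hP j]
  -- Sobolev coefficients for low indices
  have coef_low : ∀ j < ℓ, sobIP α β ℓ ω f (q j) = iteratedDeriv j f (ω j) := by
    intro j hj
    unfold sobIP
    have hz : (∫ x in Set.Ioo (-1 : ℝ) 1,
        iteratedDeriv ℓ f x * iteratedDeriv ℓ (q j) x * jacW α β x) = 0 := by
      have : (fun x => iteratedDeriv ℓ f x * iteratedDeriv ℓ (q j) x * jacW α β x) =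
          fun _ => (0 : ℝ) := by
        funext x; rw [hq_low_top j hj x]; ring
      rw [this]; simp
    rw [hz, add_zero]
    have : ∀ k ∈ Finset.range ℓ, iteratedDeriv k f (ω k) * iteratedDeriv k (q j) (ω k) =
        if k = j then iteratedDeriv j f (ω j) else 0 := by
      intro k hk
      rw [hq_low_der j hj k (Finset.mem_range.mp hk)]
      by_cases h : k = j <;> simp [h]
    rw [Finset.sum_congr rfl this, Finset.sum_ite_eq' (Finset.range ℓ)]
    simp [Finset.mem_range, hj]
  -- Sobolev coefficients for high indices
  have coef_high : ∀ j, ℓ ≤ j → sobIP α β ℓ ω f (q j) =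
      jacCoef α β jp (iteratedDeriv ℓ f) (j - ℓ) := by
    intro j hj
    unfold sobIP jacCoef
    have h1 : (∑ k ∈ Finset.range ℓ, iteratedDeriv k f (ω k) * iteratedDeriv k (q j) (ω k)) = 0 := by
      apply Finset.sum_eq_zero
      intro k hk
      rw [hq_high_der j hj k (Finset.mem_range.mp hk)]; ring
    rw [h1, zero_add]
    apply MeasureTheory.setIntegral_congr_fun measurableSet_Ioo
    intro x _
    simp only []
    rw [hq_high_top j hj x]
  constructor
  · intro n k hk
    rw [key]
    have : ∀ j ∈ Finset.range (n + 1), sobIP α β ℓ ω f (q j) * iteratedDeriv k (q j) (ω k) =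
        if j = k then iteratedDeriv k f (ω k) else 0 := by
      intro j _
      by_cases hjℓ : j < ℓ
      · rw [hq_low_der j hjℓ k hk, coef_low j hjℓ]
        by_cases h : j = k
        · subst h; simp
        · have : ¬ k = j := fun e => h e.symm
          simp [h, this]
      · push_neg at hjℓ
        rw [hq_high_der j hjℓ k hk]
        have : ¬ j = k := by omega
        simp [this]
    rw [Finset.sum_congr rfl this, Finset.sum_ite_eq' (Finset.range (n + 1))]
    simp only [Finset.mem_range]
    by_cases h : k ≤ n
    · simp [Nat.lt_succ_of_le h, h]
    · have : ¬ k < n + 1 := by omega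
      simp [this, h]
  · intro n hn x
    rw [key]
    have hterm : ∀ j ∈ Finset.range (n + 1), sobIP α β ℓ ω f (q j) * iteratedDeriv ℓ (q j) x =
        if ℓ ≤ j then jacCoef α β jp (iteratedDeriv ℓ f) (j - ℓ) * (jp (j - ℓ)).eval x
        else 0 := by
      intro j _
      by_cases h : ℓ ≤ j
      · rw [coef_high j h, hq_high_top j h x]; simp [h]
      · push_neg at h
        rw [hq_low_top j h x]
        simp [not_le.mpr h]
    rw [Finset.sum_congr rfl hterm]
    have hsplit : Finset.range (n + 1) = Finset.Ico 0 (n + 1) := by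
      rw [Finset.range_eq_Ico]
    rw [hsplit, ← Finset.sum_Ico_consecutive _ (Nat.zero_le ℓ) (by omega : ℓ ≤ n + 1)]
    have hz : (∑ j ∈ Finset.Ico 0 ℓ,
        if ℓ ≤ j then jacCoef α β jp (iteratedDeriv ℓ f) (j - ℓ) * (jp (j - ℓ)).eval x else 0) = 0 := by
      apply Finset.sum_eq_zero
      intro j hj
      simp only [Finset.mem_Ico] at hj
      simp [not_le.mpr hj.2]
    rw [hz, zero_add, Finset.sum_Ico_eq_sum_range]
    unfold jacPartialSum
    have hL : n + 1 - ℓ = n - ℓ + 1 := by omega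
    rw [hL]
    apply Finset.sum_congr rfl
    intro m _
    have : ℓ + m - ℓ = m := by omega
    simp [this]
end
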